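/- Let x, x' ∈ Σ_q^n with supp(x−x') = {i_1 < i_2 < ⋯ < i_d}, d ≥ 2; let 0 = j_0 < j_1 < ⋯ < j_m = n be the right endpoints of the runs of x and 0 = j'_0 < j'_1 < ⋯ < j'_{m'} = n the right endpoints of the runs of x'. Then for every d' > d: (a) the number of pairs (j_i, j'_{i'}) with j_i < j'_{i'}, supp(x−x') ∩ [j_i, j'_{i'}] = ∅, and d_H(x_{[n]∖{j_i}}, x'_{[n]∖{j'_{i'}}}) = d' is at most n − d; and (b) the number of pairs (j_i, j'_{i'}) with j_i > j'_{i'}, supp(x−x') ∩ [j'_{i'}, j_i] = ∅, and d_H(x_{[n]∖{j_i}}, x'_{[n]∖{j'_{i'}}}) = d' is at most n − d. -/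

import Mathlib

/-- Sequences of length `n` are modelled as functions `ℕ → Fin q` whose relevant
positions are `1, …, n` (1-based, as in the paper). `delN x j` deletes position `j`. -/
def delN {q : ℕ} (x : ℕ → Fin q) (j : ℕ) : ℕ → Fin q :=
  fun i => if i < j then x i else x (i + 1)

/-- Hamming distance between two length-`n` sequences (positions `1, …, n`). -/
def hdist {q : ℕ} (n : ℕ) (u v : ℕ → Fin q) : ℕ :=
  ((Finset.Icc 1 n).filter fun i => u i ≠ v i).card

/-- `j 0 = 0 < j 1 < ⋯ < j m = n` are the right endpoints of the runs of `x`. -/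
def IsRunDecomp {q : ℕ} (n m : ℕ) (x : ℕ → Fin q) (j : ℕ → ℕ) : Prop :=
  j 0 = 0 ∧ j m = n ∧ (∀ i, i < m → j i < j (i + 1)) ∧
  (∀ i, 1 ≤ i → i ≤ m → ∀ a b, j (i - 1) + 1 ≤ a → a ≤ j i →
      j (i - 1) + 1 ≤ b → b ≤ j i → x a = x b) ∧
  (∀ i, 1 ≤ i → i < m → x (j i) ≠ x (j i + 1))

lemma hdist_comm {q : ℕ} (n : ℕ) (u v : ℕ → Fin q) : hdist n u v = hdist n v u := by
  unfold hdist
  congr 1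
  exact Finset.filter_congr fun i _ => by simp [ne_comm]

lemma jmono {q n m : ℕ} {x : ℕ → Fin q} {j : ℕ → ℕ} (h : IsRunDecomp n m x j)
    {s t : ℕ} (hst : s < t) (htm : t ≤ m) : j s < j t := by
  induction t with
  | zero => omega
  | succ t ih =>
    have h1 : j t < j (t + 1) := h.2.2.1 t (by omega)
    rcases Nat.lt_or_ge s t with h' | h'
    · exact lt_trans (ih h' (by omega)) h1
    · have hs : s = t := by omega
      rw [hs]; exact h1

lemma hdist_lt {q : ℕ} (n : ℕ) (x x' : ℕ → Fin q) (a a₂ b : ℕ)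
    (ha : 1 ≤ a) (h1 : a < a₂) (h2 : a₂ < b) (hb : b ≤ n)
    (hfree : ∀ k, a ≤ k → k ≤ b → x k = x' k)
    (hrun : x (a + 1) ≠ x a) :
    hdist (n - 1) (delN x a₂) (delN x' b) < hdist (n - 1) (delN x a) (delN x' b) := by
  unfold hdist
  apply Finset.card_lt_card
  rw [Finset.ssubset_iff_of_subset]
  · refine ⟨a, ?_, ?_⟩
    · rw [Finset.mem_filter]
      refine ⟨Finset.mem_Icc.mpr ⟨ha, by omega⟩, ?_⟩
      have e1 : delN x a a = x (a + 1) := by simp [delN]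
      have e2 : delN x' b a = x' a := by simp [delN, show a < b by omega]
      rw [e1, e2, ← hfree a le_rfl (by omega)]
      exact hrun
    · rw [Finset.mem_filter]
      rintro ⟨-, hcond⟩
      have e1 : delN x a₂ a = x a := by simp [delN, h1]
      have e2 : delN x' b a = x' a := by simp [delN, show a < b by omega]
      rw [e1, e2] at hcond
      exact hcond (hfree a le_rfl (by omega))
  · intro i hi
    rw [Finset.mem_filter] at *
    obtain ⟨him, hcond⟩ := hi
    refine ⟨him, ?_⟩
    rcases Nat.lt_or_ge i a with h | h
    · have e1 : delN x a₂ i = x i := by simp [delN, show i < a₂ by omega]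
      have e2 : delN x a i = x i := by simp [delN, h]
      rw [e1] at hcond; rw [e2]; exact hcond
    · rcases Nat.lt_or_ge i a₂ with h' | h'
      · exfalso
        have e1 : delN x a₂ i = x i := by simp [delN, h']
        have e2 : delN x' b i = x' i := by simp [delN, show i < b by omega]
        rw [e1, e2] at hcond
        exact hcond (hfree i h (by omega))
      · have e1 : delN x a₂ i = x (i + 1) := by simp [delN, show ¬ i < a₂ by omega]
        have e2 : delN x a i = x (i + 1) := by simp [delN, show ¬ i < a by omega]
        rw [e1] at hcond; rw [e2]; exact hcond

lemma key {q : ℕ} (n m m' d : ℕ) (x x' : ℕ → Fin q)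
    (hsupp : ((Finset.Icc 1 n).filter fun k => x k ≠ x' k).card = d)
    (j j' : ℕ → ℕ)
    (hx : IsRunDecomp n m x j) (hx' : IsRunDecomp n m' x' j') (d' : ℕ) :
    ((Finset.Icc 1 m ×ˢ Finset.Icc 1 m').filter fun p =>
        j p.1 < j' p.2 ∧
        (((Finset.Icc 1 n).filter fun k => x k ≠ x' k) ∩
          Finset.Icc (j p.1) (j' p.2) = ∅) ∧
        hdist (n - 1) (delN x (j p.1)) (delN x' (j' p.2)) = d').card ≤ n - d := by
  set supp := (Finset.Icc 1 n).filter fun k => x k ≠ x' k with hsuppdef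
  have h0 := hx.1
  have h0' := hx'.1
  have hn := hx.2.1
  have hn' := hx'.2.1
  have hT : (Finset.Icc 1 n \ supp).card = n - d := by
    rw [Finset.card_sdiff_of_subset (Finset.filter_subset _ _), hsupp, Nat.card_Icc]
    omega
  rw [← hT]
  apply Finset.card_le_card_of_injOn (fun p => j' p.2)
  · -- maps to
    intro p hp
    rw [Finset.mem_coe, Finset.mem_filter] at hp
    obtain ⟨hprod, hlt, hint, hdd⟩ := hp
    rw [Finset.mem_product, Finset.mem_Icc, Finset.mem_Icc] at hprod
    have hb1 : 1 ≤ j' p.2 := by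
      have := jmono hx' (show 0 < p.2 by omega) (by omega)
      omega
    have hbn : j' p.2 ≤ n := by
      rcases Nat.lt_or_ge p.2 m' with h | h
      · have := jmono hx' h (le_refl m'); omega
      · have hpm : p.2 = m' := by omega
        rw [hpm, hx'.2.1]
    rw [Finset.mem_coe, Finset.mem_sdiff]
    refine ⟨Finset.mem_Icc.mpr ⟨hb1, hbn⟩, fun hmem => ?_⟩
    have : j' p.2 ∈ supp ∩ Finset.Icc (j p.1) (j' p.2) :=
      Finset.mem_inter.mpr ⟨hmem, Finset.mem_Icc.mpr ⟨le_of_lt hlt, le_rfl⟩⟩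
    rw [hint] at this
    exact absurd this (Finset.notMem_empty _)
  · -- injective
    intro p hp p₂ hp₂ heq
    replace heq : j' p.2 = j' p₂.2 := heq
    simp only [Finset.coe_filter, Set.mem_setOf_eq] at hp hp₂
    obtain ⟨hprod, hlt, hint, hdd⟩ := hp
    obtain ⟨hprod₂, hlt₂, hint₂, hdd₂⟩ := hp₂
    rw [Finset.mem_product, Finset.mem_Icc, Finset.mem_Icc] at hprod hprod₂
    -- second components equal
    have h2 : p.2 = p₂.2 := by
      by_contra hne
      rcases Nat.lt_or_ge p.2 p₂.2 with h | h
      · have := jmono hx' h (by omega); omega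
      · have : p₂.2 < p.2 := by omega
        have := jmono hx' this (by omega); omega
    -- first components equal
    have key1 : ∀ (r r₂ : ℕ × ℕ), r.1 ≤ m → r₂.1 ≤ m → 1 ≤ r.1 → 1 ≤ r₂.2 → r₂.2 ≤ m' →
        j r.1 < j' r.2 → j r₂.1 < j' r₂.2 → j' r.2 = j' r₂.2 →
        (supp ∩ Finset.Icc (j r.1) (j' r.2) = ∅) →
        hdist (n - 1) (delN x (j r.1)) (delN x' (j' r.2)) = d' →
        hdist (n - 1) (delN x (j r₂.1)) (delN x' (j' r₂.2)) = d' →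
        ¬ (j r.1 < j r₂.1) := by
      intro r r₂ hrm hr2m hr1 hr21 hr2m' hl hl₂ he hi hdd hdd₂ hjlt
      have hbn2 : j' r₂.2 ≤ n := by
        rcases Nat.lt_or_ge r₂.2 m' with h | h
        · have := jmono hx' h (le_refl m'); omega
        · have hrm' : r₂.2 = m' := by omega
          rw [hrm', hx'.2.1]
      have hbn : j' r.2 ≤ n := by omega
      have hr1m : r.1 < m := by
        by_contra hc
        have : r.1 = m := by omega
        rw [this, hx.2.1] at hl
        omega
      have ha1 : 1 ≤ j r.1 := by
        have := jmono hx (show 0 < r.1 by omega) (by omega); omega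
      have hfree : ∀ k, j r.1 ≤ k → k ≤ j' r.2 → x k = x' k := by
        intro k hk1 hk2
        by_contra hne
        have : k ∈ supp ∩ Finset.Icc (j r.1) (j' r.2) := by
          refine Finset.mem_inter.mpr ⟨?_, Finset.mem_Icc.mpr ⟨hk1, hk2⟩⟩
          rw [hsuppdef, Finset.mem_filter]
          exact ⟨Finset.mem_Icc.mpr ⟨by omega, by omega⟩, hne⟩
        rw [hi] at this
        exact absurd this (Finset.notMem_empty _)
      have hrun : x (j r.1 + 1) ≠ x (j r.1) :=
        fun h => hx.2.2.2.2 r.1 hr1 hr1m h.symm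
      have hlt' := hdist_lt n x x' (j r.1) (j r₂.1) (j' r.2) ha1 hjlt
        (by rw [he]; exact hl₂) hbn hfree hrun
      rw [← he] at hdd₂
      omega
    have h1 : p.1 = p₂.1 := by
      by_contra hne
      rcases Nat.lt_or_ge p.1 p₂.1 with h | h
      · exact key1 p p₂ hprod.1.2 hprod₂.1.2 hprod.1.1 hprod₂.2.1 hprod₂.2.2
          hlt hlt₂ heq hint hdd hdd₂ (jmono hx h (by omega))
      · exact key1 p₂ p hprod₂.1.2 hprod.1.2 hprod₂.1.1 hprod.2.1 hprod.2.2
          hlt₂ hlt heq.symm hint₂ hdd₂ hdd (jmono hx (by omega) (by omega))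
    exact Prod.ext h1 h2

theorem stmt12 (q n m m' d : ℕ) (hq : 2 ≤ q) (hd : 2 ≤ d)
    (x x' : ℕ → Fin q)
    (hsupp : ((Finset.Icc 1 n).filter fun k => x k ≠ x' k).card = d)
    (j j' : ℕ → ℕ)
    (hx : IsRunDecomp n m x j) (hx' : IsRunDecomp n m' x' j')
    (d' : ℕ) (hd' : d < d') :
    ((Finset.Icc 1 m ×ˢ Finset.Icc 1 m').filter fun p =>
        j p.1 < j' p.2 ∧
        (((Finset.Icc 1 n).filter fun k => x k ≠ x' k) ∩
          Finset.Icc (j p.1) (j' p.2) = ∅) ∧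
        hdist (n - 1) (delN x (j p.1)) (delN x' (j' p.2)) = d').card ≤ n - d ∧
    ((Finset.Icc 1 m ×ˢ Finset.Icc 1 m').filter fun p =>
        j' p.2 < j p.1 ∧
        (((Finset.Icc 1 n).filter fun k => x k ≠ x' k) ∩
          Finset.Icc (j' p.2) (j p.1) = ∅) ∧
        hdist (n - 1) (delN x (j p.1)) (delN x' (j' p.2)) = d').card ≤ n - d := by
  have hsupp' : ((Finset.Icc 1 n).filter fun k => x' k ≠ x k).card = d := by
    rw [Finset.filter_congr (fun k _ => (ne_comm : x' k ≠ x k ↔ x k ≠ x' k))]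
    exact hsupp
  have hsuppeq : ((Finset.Icc 1 n).filter fun k => x' k ≠ x k) =
      ((Finset.Icc 1 n).filter fun k => x k ≠ x' k) :=
    Finset.filter_congr (fun k _ => (ne_comm : x' k ≠ x k ↔ x k ≠ x' k))
  constructor
  · exact key n m m' d x x' hsupp j j' hx hx' d'
  · have hk := key n m' m d x' x hsupp' j' j hx' hx d'
    calc ((Finset.Icc 1 m ×ˢ Finset.Icc 1 m').filter fun p =>
        j' p.2 < j p.1 ∧
        (((Finset.Icc 1 n).filter fun k => x k ≠ x' k) ∩
          Finset.Icc (j' p.2) (j p.1) = ∅) ∧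
        hdist (n - 1) (delN x (j p.1)) (delN x' (j' p.2)) = d').card
        ≤ ((Finset.Icc 1 m' ×ˢ Finset.Icc 1 m).filter fun p =>
        j' p.1 < j p.2 ∧
        (((Finset.Icc 1 n).filter fun k => x' k ≠ x k) ∩
          Finset.Icc (j' p.1) (j p.2) = ∅) ∧
        hdist (n - 1) (delN x' (j' p.1)) (delN x (j p.2)) = d').card := by
          apply Finset.card_le_card_of_injOn (fun p => p.swap)
          · intro p hp
            rw [Finset.mem_coe, Finset.mem_filter] at hp ⊢
            obtain ⟨hprod, h1, h2, h3⟩ := hp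
            rw [Finset.mem_product] at hprod
            refine ⟨Finset.mem_product.mpr ⟨hprod.2, hprod.1⟩, h1, ?_, ?_⟩
            · rw [hsuppeq]; exact h2
            · rw [hdist_comm]; exact h3
          · intro p _ p₂ _ h
            exact Prod.swap_injective h
        _ ≤ n - d := hk
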